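/- Let F be an algebraically closed field of characteristic zero and (V, q) a non-degenerate quadratic F-space with dim_F V ≥ 4. Let N ∈ End_F(V) be skew-adjoint for q (i.e. b_q(Nx, y) + b_q(x, Ny) = 0 for all x, y) with N^2 = 0 and rank N = 2. Then there exist vectors e_1, e_2, e'_1, e'_2 ∈ V with b_q(e_i, e_j) = 0, b_q(e'_i, e'_j) = 0, and b_q(e_i, e'_j) = δ_{ij} for i, j ∈ {1, 2}, such that N e_1 = e'_2, N e_2 = −e'_1, N e'_1 = N e'_2 = 0, and N x = 0 for every x in the orthogonal complement (with respect to b_q) of the span of {e_1, e_2, e'_1, e'_2}. -/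

import Mathlib

/-- normal form of a skew-adjoint square-zero operator of rank 2 on a
non-degenerate quadratic space of dimension ≥ 4 over an algebraically closed field of
characteristic zero (the quadratic space is encoded by its associated non-degenerate
symmetric bilinear form `B`). -/
theorem stmt6 {F V : Type*} [Field F] [IsAlgClosed F] [CharZero F]
    [AddCommGroup V] [Module F V] [FiniteDimensional F V]
    (B : LinearMap.BilinForm F V) (hsymm : ∀ x y : V, B x y = B y x)
    (hB : B.Nondegenerate)
    (hdim : 4 ≤ Module.finrank F V)
    (N : Module.End F V)
    (hskew : ∀ x y : V, B (N x) y + B x (N y) = 0)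
    (hN2 : N ^ 2 = 0)
    (hrk : Module.finrank F (LinearMap.range N) = 2) :
    ∃ e₁ e₂ e₁' e₂' : V,
      (B e₁ e₁ = 0 ∧ B e₁ e₂ = 0 ∧ B e₂ e₁ = 0 ∧ B e₂ e₂ = 0) ∧
      (B e₁' e₁' = 0 ∧ B e₁' e₂' = 0 ∧ B e₂' e₁' = 0 ∧ B e₂' e₂' = 0) ∧
      (B e₁ e₁' = 1 ∧ B e₁ e₂' = 0 ∧ B e₂ e₁' = 0 ∧ B e₂ e₂' = 1) ∧
      N e₁ = e₂' ∧ N e₂ = -e₁' ∧ N e₁' = 0 ∧ N e₂' = 0 ∧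
      ∀ x : V, B e₁ x = 0 → B e₂ x = 0 → B e₁' x = 0 → B e₂' x = 0 → N x = 0 := by
  have hskew' : ∀ x y : V, B (N x) y = -(B x (N y)) := fun x y =>
    eq_neg_of_add_eq_zero_left (hskew x y)
  have hself : ∀ x : V, B x (N x) = 0 := by
    intro x
    have h := hskew x x
    rw [hsymm (N x) x] at h
    exact add_self_eq_zero.mp h
  have hNN : ∀ x : V, N (N x) = 0 := by
    intro x
    have h := LinearMap.ext_iff.mp hN2 x
    simpa [pow_two, Module.End.mul_apply] using h
  have horth : ∀ x y : V, B (N x) (N y) = 0 := by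
    intro x y
    rw [hskew' x (N y), hNN y, map_zero, neg_zero]
  have hN0 : N ≠ 0 := by
    rintro rfl
    rw [LinearMap.range_zero] at hrk
    rw [finrank_bot] at hrk
    omega
  obtain ⟨y₀, hy₀⟩ : ∃ y : V, N y ≠ 0 := by
    by_contra h
    push_neg at h
    exact hN0 (LinearMap.ext fun y => h y)
  obtain ⟨x₀, hx₀⟩ : ∃ x : V, B x (N y₀) ≠ 0 := by
    by_contra h
    push_neg at h
    exact hy₀ (hB.1 (N y₀) fun y => (hsymm (N y₀) y).trans (h y))
  set c := B x₀ (N y₀) with hcdef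
  set u₁ : V := (-c)⁻¹ • x₀ with hu₁
  set u₂ : V := y₀ with hu₂
  have p12 : B u₁ (N u₂) = -1 := by
    rw [hu₁, map_smul, LinearMap.smul_apply, smul_eq_mul, ← hcdef, ← neg_inv, neg_mul,
      inv_mul_cancel₀ hx₀]
  have p11 : B u₁ (N u₁) = 0 := hself u₁
  have p22 : B u₂ (N u₂) = 0 := hself u₂
  have p21 : B u₂ (N u₁) = 1 := by
    rw [hsymm u₂ (N u₁), hskew' u₁ u₂, p12, neg_neg]
  have s11 : B (N u₁) u₁ = 0 := by rw [hsymm (N u₁) u₁, p11]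
  have s12 : B (N u₂) u₁ = -1 := by rw [hsymm (N u₂) u₁, p12]
  have s21 : B (N u₁) u₂ = 1 := by rw [hsymm (N u₁) u₂, p21]
  have s22 : B (N u₂) u₂ = 0 := by rw [hsymm (N u₂) u₂, p22]
  have hli : LinearIndependent F ![N u₁, N u₂] := by
    rw [LinearIndependent.pair_iff]
    intro s t hst
    have h1 := congrArg (B u₂) hst
    have h2 := congrArg (B u₁) hst
    simp only [map_add, map_smul, smul_eq_mul, p11, p12, p21, p22, map_zero, mul_zero,
      mul_one, mul_neg_one, add_zero, zero_add] at h1 h2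
    exact ⟨h1, neg_eq_zero.mp h2⟩
  have hspan : Submodule.span F {N u₁, N u₂} = LinearMap.range N := by
    apply Submodule.eq_of_le_of_finrank_le
    · rw [Submodule.span_le]
      intro z hz
      simp only [Set.mem_insert_iff, Set.mem_singleton_iff] at hz
      rcases hz with rfl | rfl
      · exact LinearMap.mem_range_self N u₁
      · exact LinearMap.mem_range_self N u₂
    · rw [hrk]
      have hr : ({N u₁, N u₂} : Set V) = Set.range ![N u₁, N u₂] := by
        simp [Matrix.range_cons, Matrix.range_empty, Set.pair_comm]
      rw [hr, finrank_span_eq_card hli]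
      simp
  refine ⟨u₁ + (-(B u₁ u₁) / 2) • (-(N u₂)) + (-(B u₁ u₂)) • (N u₁),
    u₂ + (-(B u₂ u₂) / 2) • (N u₁), -(N u₂), N u₁, ⟨?_, ?_, ?_, ?_⟩, ⟨?_, ?_, ?_, ?_⟩,
    ⟨?_, ?_, ?_, ?_⟩, ?_, ?_, ?_, ?_, ?_⟩
  · simp only [map_add, map_smul, map_neg, LinearMap.add_apply, LinearMap.smul_apply,
      LinearMap.neg_apply, smul_eq_mul, p11, p12, p21, p22, s11, s12, s21, s22, horth,
      hsymm u₂ u₁]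
    ring
  · simp only [map_add, map_smul, map_neg, LinearMap.add_apply, LinearMap.smul_apply,
      LinearMap.neg_apply, smul_eq_mul, p11, p12, p21, p22, s11, s12, s21, s22, horth,
      hsymm u₂ u₁]
    ring
  · simp only [map_add, map_smul, map_neg, LinearMap.add_apply, LinearMap.smul_apply,
      LinearMap.neg_apply, smul_eq_mul, p11, p12, p21, p22, s11, s12, s21, s22, horth,
      hsymm u₂ u₁]
    ring
  · simp only [map_add, map_smul, map_neg, LinearMap.add_apply, LinearMap.smul_apply,
      LinearMap.neg_apply, smul_eq_mul, p11, p12, p21, p22, s11, s12, s21, s22, horth,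
      hsymm u₂ u₁]
    ring
  · simp only [map_neg, LinearMap.neg_apply, horth, neg_zero]
  · simp only [map_neg, LinearMap.neg_apply, horth, neg_zero]
  · simp only [map_neg, LinearMap.neg_apply, horth, neg_zero]
  · exact horth u₁ u₁
  · simp only [map_add, map_smul, map_neg, LinearMap.add_apply, LinearMap.smul_apply,
      LinearMap.neg_apply, smul_eq_mul, p11, p12, p21, p22, s11, s12, s21, s22, horth,
      hsymm u₂ u₁]
    ring
  · simp only [map_add, map_smul, map_neg, LinearMap.add_apply, LinearMap.smul_apply,
      LinearMap.neg_apply, smul_eq_mul, p11, p12, p21, p22, s11, s12, s21, s22, horth,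
      hsymm u₂ u₁]
    ring
  · simp only [map_add, map_smul, map_neg, LinearMap.add_apply, LinearMap.smul_apply,
      LinearMap.neg_apply, smul_eq_mul, p11, p12, p21, p22, s11, s12, s21, s22, horth,
      hsymm u₂ u₁]
    ring
  · simp only [map_add, map_smul, map_neg, LinearMap.add_apply, LinearMap.smul_apply,
      LinearMap.neg_apply, smul_eq_mul, p11, p12, p21, p22, s11, s12, s21, s22, horth,
      hsymm u₂ u₁]
    ring
  · simp [map_add, map_smul, map_neg, hNN]
  · simp [map_add, map_smul, map_neg, hNN]
  · simp [map_neg, hNN]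
  · exact hNN u₁
  · intro x h1 h2 h3 h4
    simp only [map_neg, LinearMap.neg_apply, neg_eq_zero] at h3
    apply hB.1 (N x)
    intro n
    rw [hskew' x n, neg_eq_zero, hsymm x (N n)]
    obtain ⟨a, b, hab⟩ := Submodule.mem_span_pair.mp
      (hspan ▸ LinearMap.mem_range_self N n)
    rw [← hab]
    simp [map_add, map_smul, LinearMap.add_apply, LinearMap.smul_apply, h3, h4]
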